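/- With u ∈ U, a > 0, and ũ_{z,p} defined as ũ_{z,p}(x,y) := inf { z + p(x−x') + (a/p)(y−y') : 0 ≤ x' ≤ x, 0 ≤ y' ≤ y, u(x',y') ≤ z }, for each x, y, z ≥ 0 the supremum sup_{p>0} ũ_{z,p}(x,y) is attained at some p > 0. -/

import Mathlib

open Set

/-- `u` belongs to the class `U`: doubly increasing on the nonnegative quadrant,
nonnegative there, and vanishing on the coordinate axes. -/
def MemU (u : ℝ × ℝ → ℝ) : Prop :=
  (∀ p q : ℝ × ℝ, 0 ≤ p.1 → 0 ≤ p.2 → p.1 ≤ q.1 → p.2 ≤ q.2 → u p ≤ u q) ∧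
  (∀ p : ℝ × ℝ, 0 ≤ p.1 → 0 ≤ p.2 → 0 ≤ u p) ∧
  (∀ t : ℝ, 0 ≤ t → u (0, t) = 0 ∧ u (t, 0) = 0)

/-- The regularization `ũ_{z,p}(x,y)`. -/
noncomputable def tzp (u : ℝ × ℝ → ℝ) (a z p x y : ℝ) : ℝ :=
  sInf ((fun q : ℝ × ℝ => z + p * (x - q.1) + (a / p) * (y - q.2)) ''
    {q : ℝ × ℝ | 0 ≤ q.1 ∧ q.1 ≤ x ∧ 0 ≤ q.2 ∧ q.2 ≤ y ∧ u q ≤ z})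

/-- The regularization `ũ_z(x,y) = sup_{p>0} ũ_{z,p}(x,y)`. -/
noncomputable def tz (u : ℝ × ℝ → ℝ) (a z x y : ℝ) : ℝ :=
  sSup ((fun p => tzp u a z p x y) '' Ioi 0)

/-- The regularization `ũ(x,y) = inf_{z≥0} ũ_z(x,y)`. -/
noncomputable def tu (u : ℝ × ℝ → ℝ) (a x y : ℝ) : ℝ :=
  sInf ((fun z => tz u a z x y) '' Ici 0)

theorem stmt_9 (u : ℝ × ℝ → ℝ) (hu : MemU u) (a : ℝ) (ha : 0 < a)
    (x y z : ℝ) (hx : 0 ≤ x) (hy : 0 ≤ y) (hz : 0 ≤ z) :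
    ∃ p > (0:ℝ), tz u a z x y = tzp u a z p x y := by
  set A : Set (ℝ × ℝ) := {q : ℝ × ℝ | 0 ≤ q.1 ∧ q.1 ≤ x ∧ 0 ≤ q.2 ∧ q.2 ≤ y ∧ u q ≤ z} with hA
  set g : ℝ → ℝ := fun p => tzp u a z p x y with hg
  have h0y : ((0:ℝ), y) ∈ A := ⟨le_rfl, hx, hy, le_rfl, by rw [(hu.2.2 y hy).1]; exact hz⟩
  have hx0 : (x, (0:ℝ)) ∈ A := ⟨hx, le_rfl, le_rfl, hy, by rw [(hu.2.2 x hx).2]; exact hz⟩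
  -- each candidate value is ≥ z
  have hlb : ∀ p : ℝ, 0 < p → ∀ q ∈ A, z ≤ z + p * (x - q.1) + (a / p) * (y - q.2) := by
    intro p hp q hq
    obtain ⟨h1, h2, h3, h4, -⟩ := hq
    have := mul_nonneg hp.le (sub_nonneg.2 h2)
    have := mul_nonneg (div_nonneg ha.le hp.le) (sub_nonneg.2 h4)
    linarith
  have hge : ∀ p : ℝ, 0 < p → z ≤ g p := by
    intro p hp
    refine le_csInf ⟨_, mem_image_of_mem _ h0y⟩ ?_
    rintro b ⟨q, hq, rfl⟩
    exact hlb p hp q hq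
  have hle : ∀ p : ℝ, 0 < p → ∀ q ∈ A, g p ≤ z + p * (x - q.1) + (a / p) * (y - q.2) := by
    intro p hp q hq
    exact csInf_le ⟨z, by rintro b ⟨q', hq', rfl⟩; exact hlb p hp q' hq'⟩
      (mem_image_of_mem _ hq)
  have hle1 : ∀ p : ℝ, 0 < p → g p ≤ z + p * x := by
    intro p hp
    have := hle p hp _ h0y
    simpa using this
  have hle2 : ∀ p : ℝ, 0 < p → g p ≤ z + (a / p) * y := by
    intro p hp
    have := hle p hp _ hx0
    simpa using this
  -- uniform upper bound
  have hbdd : BddAbove (g '' Ioi 0) := by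
    refine ⟨z + Real.sqrt (a * x * y), ?_⟩
    rintro b ⟨p, hp, rfl⟩
    have hp : (0:ℝ) < p := hp
    have hs : 0 ≤ Real.sqrt (a * x * y) := Real.sqrt_nonneg _
    have hsq : Real.sqrt (a * x * y) ^ 2 = a * x * y :=
      Real.sq_sqrt (by positivity)
    rcases le_total (p * x) ((a / p) * y) with h | h
    · have h1 : g p ≤ z + p * x := hle1 p hp
      have hprod : (p * x) * ((a / p) * y) = a * x * y := by
        field_simp
      have hpx : 0 ≤ p * x := mul_nonneg hp.le hx
      have : p * x ≤ Real.sqrt (a * x * y) := by nlinarith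
      linarith
    · have h1 : g p ≤ z + (a / p) * y := hle2 p hp
      have hprod : (p * x) * ((a / p) * y) = a * x * y := by
        field_simp
      have hay : 0 ≤ (a / p) * y := mul_nonneg (by positivity) hy
      have : (a / p) * y ≤ Real.sqrt (a * x * y) := by nlinarith
      linarith
  have hne : (g '' Ioi 0).Nonempty := ⟨g 1, mem_image_of_mem _ (by norm_num)⟩
  set M : ℝ := tz u a z x y with hM
  have hMs : M = sSup (g '' Ioi 0) := rfl
  have hgleM : ∀ p : ℝ, 0 < p → g p ≤ M := fun p hp =>
    le_csSup hbdd (mem_image_of_mem _ hp)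
  have hzM : z ≤ M := le_trans (hge 1 one_pos) (hgleM 1 one_pos)
  rcases eq_or_lt_of_le hzM with hcase | hcase
  · -- M = z : attained at p = 1
    refine ⟨1, one_pos, le_antisymm ?_ (hgleM 1 one_pos)⟩
    rw [← hcase]; exact hge 1 one_pos
  · -- z < M
    have hxpos : 0 < x := by
      by_contra hxle
      have hx0' : x = 0 := le_antisymm (not_lt.1 hxle) hx
      have : M ≤ z := by
        apply csSup_le hne
        rintro b ⟨p, hp, rfl⟩
        have := hle1 p hp
        rw [hx0'] at this; simpa using this
      linarith
    have hypos : 0 < y := by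
      by_contra hyle
      have hy0' : y = 0 := le_antisymm (not_lt.1 hyle) hy
      have : M ≤ z := by
        apply csSup_le hne
        rintro b ⟨p, hp, rfl⟩
        have := hle2 p hp
        rw [hy0'] at this; simpa using this
      linarith
    set c : ℝ := (M + z) / 2 with hc
    have hzc : z < c := by simp [hc]; linarith
    have hcM : c < M := by simp [hc]; linarith
    set p₁ : ℝ := (c - z) / x with hp₁
    set p₂ : ℝ := a * y / (c - z) with hp₂
    have hp₁pos : 0 < p₁ := div_pos (by linarith) hxpos
    have hp₂pos : 0 < p₂ := div_pos (by positivity) (by linarith)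
    -- near-maximizing sequence lies in [p₁, p₂]
    have hseq : ∀ n : ℕ, ∃ p ∈ Icc p₁ p₂, max c (M - 1 / (n + 1)) < g p := by
      intro n
      have hlt : max c (M - 1 / (n + 1)) < M := by
        apply max_lt hcM
        have : (0:ℝ) < 1 / (n + 1) := by positivity
        linarith
      obtain ⟨b, ⟨p, hp, rfl⟩, hb⟩ := exists_lt_of_lt_csSup hne hlt
      have hp : (0:ℝ) < p := hp
      have hcgp : c < g p := lt_of_le_of_lt (le_max_left _ _) hb
      refine ⟨p, ⟨?_, ?_⟩, hb⟩
      · -- p₁ ≤ p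
        by_contra hco
        push_neg at hco
        have := hle1 p hp
        have : g p ≤ z + p₁ * x := by nlinarith
        have : p₁ * x = c - z := by rw [hp₁, div_mul_cancel₀ _ hxpos.ne']
        linarith [hle1 p hp, mul_le_mul_of_nonneg_right hco.le hx,
          show p₁ * x = c - z from by rw [hp₁, div_mul_cancel₀ _ hxpos.ne']]
      · -- p ≤ p₂
        by_contra hco
        push_neg at hco
        have h2 := hle2 p hp
        have hp₂eq : p₂ * (c - z) = a * y := by
          have hcz : c - z ≠ 0 := by linarith
          rw [hp₂]; field_simp
        have h3 : (a / p) * y ≤ c - z := by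
          rw [div_mul_eq_mul_div, div_le_iff₀ hp]
          nlinarith
        linarith
    choose pn hpn hgpn using hseq
    obtain ⟨p', hp'mem, φ, hφ, hφt⟩ :=
      (isCompact_Icc (a := p₁) (b := p₂)).tendsto_subseq hpn
    have hp'pos : 0 < p' := lt_of_lt_of_le hp₁pos hp'mem.1
    refine ⟨p', hp'pos, ?_⟩
    -- g(pn (φ n)) → M
    have htM : Filter.Tendsto (fun n => g (pn (φ n))) Filter.atTop (nhds M) := by
      have hlow : ∀ n : ℕ, M - 1 / (n + 1) ≤ g (pn (φ n)) := by
        intro n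
        have h1 : M - 1 / (φ n + 1) ≤ g (pn (φ n)) :=
          le_of_lt (lt_of_le_of_lt (le_max_right _ _) (hgpn (φ n)))
        have hφn : (n:ℝ) ≤ φ n := Nat.cast_le.2 hφ.le_apply
        have h2 : (1:ℝ) / (φ n + 1) ≤ 1 / (n + 1) := by
          apply one_div_le_one_div_of_le (by positivity)
          push_cast
          linarith
        linarith
      have hup : ∀ n : ℕ, g (pn (φ n)) ≤ M := fun n =>
        hgleM _ (lt_of_lt_of_le hp₁pos (hpn (φ n)).1)
      refine tendsto_of_tendsto_of_tendsto_of_le_of_le ?_ tendsto_const_nhds hlow hup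
      have : Filter.Tendsto (fun n : ℕ => (1:ℝ) / (n + 1)) Filter.atTop (nhds 0) :=
        tendsto_one_div_add_atTop_nhds_zero_nat
      simpa using tendsto_const_nhds.sub this
    -- M ≤ g p'
    have hM_le : M ≤ g p' := by
      refine le_csInf ⟨_, mem_image_of_mem _ h0y⟩ ?_
      rintro b ⟨q, hq, rfl⟩
      have hterm : Filter.Tendsto
          (fun n => z + pn (φ n) * (x - q.1) + (a / pn (φ n)) * (y - q.2))
          Filter.atTop (nhds (z + p' * (x - q.1) + (a / p') * (y - q.2))) := by
        have h1 : Filter.Tendsto (fun n => pn (φ n)) Filter.atTop (nhds p') := hφt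
        exact ((tendsto_const_nhds.add (h1.mul tendsto_const_nhds)).add
          (((tendsto_const_nhds.div h1 (ne_of_gt hp'pos)).mul tendsto_const_nhds)))
      refine le_of_tendsto_of_tendsto htM hterm ?_
      filter_upwards with n
      exact hle _ (lt_of_lt_of_le hp₁pos (hpn (φ n)).1) q hq
    exact le_antisymm hM_le (hgleM p' hp'pos)
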